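/- arXiv:2305.16441 — 2 statements merged into one kernel-verified Lean document; each statement's English description precedes it below -/
import Mathlib

section
/- Let R be a commutative ring, J ⊆ R an ideal, and consider the polynomial ring R[z₁,…,z_k] with 𝔪 = (z₁,…,z_k). Then (J² + 𝔪) ∩ (J + 𝔪²) = J² + J·𝔪 + 𝔪² as ideals of R[z₁,…,z_k], where J denotes the extension of J to R[z₁,…,z_k]. -/
open MvPolynomial

/-- `J·R[z] ⊓ 𝔪 ≤ J·R[z] · 𝔪`. -/
lemma aux_inf_le (R : Type*) [CommRing R] (k : ℕ) (J : Ideal R) :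
    (Ideal.map (MvPolynomial.C : R →+* MvPolynomial (Fin k) R) J) ⊓
      Ideal.span (Set.range (MvPolynomial.X : Fin k → MvPolynomial (Fin k) R)) ≤
    (Ideal.map (MvPolynomial.C : R →+* MvPolynomial (Fin k) R) J) *
      Ideal.span (Set.range (MvPolynomial.X : Fin k → MvPolynomial (Fin k) R)) := by
  classical
  rintro p ⟨hJ, hm⟩
  simp only [SetLike.mem_coe] at hJ hm
  rw [MvPolynomial.mem_map_C_iff] at hJ
  rw [← Set.image_univ, MvPolynomial.mem_ideal_span_X_image] at hm
  rw [show p = ∑ m ∈ p.support, MvPolynomial.monomial m (p.coeff m) from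
    (p.support_sum_monomial_coeff).symm]
  refine Ideal.sum_mem _ fun m hmem => ?_
  rw [show (MvPolynomial.monomial m (p.coeff m) : MvPolynomial (Fin k) R)
      = MvPolynomial.C (p.coeff m) * MvPolynomial.monomial m 1 by
    rw [MvPolynomial.C_mul_monomial, mul_one]]
  refine Ideal.mul_mem_mul (Ideal.mem_map_of_mem _ (hJ m)) ?_
  rw [← Set.image_univ, MvPolynomial.mem_ideal_span_X_image]
  intro m' hm'
  rw [MvPolynomial.support_monomial] at hm'
  split_ifs at hm' with h
  · exact absurd hm' (Finset.notMem_empty _)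
  · obtain ⟨i, _, hi⟩ := hm m hmem
    rw [Finset.mem_singleton] at hm'
    exact ⟨i, Set.mem_univ i, hm' ▸ hi⟩

/-- For a commutative ring `R`, an ideal `J ⊆ R` extended to `R[z₁,…,z_k]`,
and `𝔪 = (z₁,…,z_k)`, one has `(J² + 𝔪) ∩ (J + 𝔪²) = J² + J·𝔪 + 𝔪²`. -/
theorem stmt7 (R : Type*) [CommRing R] (k : ℕ) (J : Ideal R) :
    ((Ideal.map (MvPolynomial.C : R →+* MvPolynomial (Fin k) R) J) ^ 2 +
        Ideal.span (Set.range (MvPolynomial.X : Fin k → MvPolynomial (Fin k) R))) ⊓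
      ((Ideal.map (MvPolynomial.C : R →+* MvPolynomial (Fin k) R) J) +
        (Ideal.span (Set.range (MvPolynomial.X : Fin k → MvPolynomial (Fin k) R))) ^ 2) =
    (Ideal.map (MvPolynomial.C : R →+* MvPolynomial (Fin k) R) J) ^ 2 +
      (Ideal.map (MvPolynomial.C : R →+* MvPolynomial (Fin k) R) J) *
        Ideal.span (Set.range (MvPolynomial.X : Fin k → MvPolynomial (Fin k) R)) +
      (Ideal.span (Set.range (MvPolynomial.X : Fin k → MvPolynomial (Fin k) R))) ^ 2 := by
  set J' := Ideal.map (MvPolynomial.C : R →+* MvPolynomial (Fin k) R) J with hJ'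
  set M := Ideal.span (Set.range (MvPolynomial.X : Fin k → MvPolynomial (Fin k) R)) with hM
  refine le_antisymm ?_ ?_
  · rintro f ⟨hf1, hf2⟩
    simp only [SetLike.mem_coe] at hf1 hf2
    rw [Submodule.add_eq_sup, Submodule.mem_sup] at hf1
    obtain ⟨a, ha, m, hm, hsum⟩ := hf1
    have hmJ : m ∈ J' + M ^ 2 := by
      have : m = f - a := by rw [← hsum]; ring
      rw [this]
      exact Submodule.sub_mem _ hf2
        (Submodule.mem_sup_left (Ideal.pow_le_self two_ne_zero ha))
    rw [Submodule.add_eq_sup, Submodule.mem_sup] at hmJ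
    obtain ⟨b, hb, n, hn, hsum2⟩ := hmJ
    have hbM : b ∈ J' ⊓ M := by
      refine ⟨hb, ?_⟩
      have : b = m - n := by rw [← hsum2]; ring
      rw [this]
      exact Submodule.sub_mem _ hm (Ideal.pow_le_self two_ne_zero hn)
    have hbJM : b ∈ J' * M := aux_inf_le R k J hbM
    have : f = a + b + n := by rw [← hsum, ← hsum2]; ring
    rw [this]
    exact Submodule.add_mem _ (Submodule.mem_sup_left
      (Submodule.add_mem _ (Submodule.mem_sup_left ha) (Submodule.mem_sup_right hbJM)))
      (Submodule.mem_sup_right hn)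
  · refine sup_le (sup_le ?_ ?_) ?_
    · exact le_inf (le_sup_of_le_left le_rfl)
        (le_sup_of_le_left (Ideal.pow_le_self two_ne_zero))
    · exact le_inf (le_sup_of_le_right Ideal.mul_le_right)
        (le_sup_of_le_left Ideal.mul_le_left)
    · exact le_inf (le_sup_of_le_right (Ideal.pow_le_self two_ne_zero)) le_sup_right
end

section
/- Let V be a complex vector bundle of rank r over a compact topological space, given by transition functions φ_{ij} on a finite open cover. If L is a topological (or smooth) complex line bundle given by transition functions Φ_{ij} : V_{ij} → ℂ* with cocycle defect δ_{ijk} := Φ_{jk}Φ_{ik}^{-1}Φ_{ij} satisfying |δ_{ijk} − 1| < 1 everywhere, and {h_k} is a partition of unity subordinate to the cover, then Ψ_{ij} := exp(−Σ_k h_k log δ_{kij})·Φ_{ij} satisfies the exact cocycle condition Ψ_{jk}Ψ_{ik}^{-1}Ψ_{ij} = 1 on all triple overlaps, where log is the principal branch. -/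
/-- The cocycle defect `δ_{ijk} = Φ_{jk}·Φ_{ik}⁻¹·Φ_{ij}`. -/
noncomputable def cocycleDefect {X ι : Type*} (Φ : ι → ι → X → ℂ) (i j k : ι) (x : X) : ℂ :=
  Φ j k x * (Φ i k x)⁻¹ * Φ i j x

/-- The corrected transition functions
`Ψ_{ij} = exp(−Σ_l h_l log δ_{lij})·Φ_{ij}` (principal branch of `log`). -/
noncomputable def correctedTransition {X ι : Type*} [Fintype ι]
    (h : ι → X → ℝ) (Φ : ι → ι → X → ℂ) (i j : ι) (x : X) : ℂ :=
  Complex.exp (-(∑ l, (h l x : ℂ) * Complex.log (cocycleDefect Φ l i j x))) * Φ i j x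

lemma ne_zero_of_abs_sub_one_lt (z : ℂ) (hz : ‖z - 1‖ < 1) : z ≠ 0 := by
  intro h; simp [h] at hz

lemma arg_small (z : ℂ) (hz : ‖z - 1‖ < 1) : |Complex.arg z| < Real.pi / 2 := by
  rw [Complex.abs_arg_lt_pi_div_two_iff]
  left
  have h1 : |(z - 1).re| ≤ ‖z - 1‖ := Complex.abs_re_le_norm _
  have : (z - 1).re = z.re - 1 := by simp
  rw [this] at h1
  cases abs_cases (z.re - 1) with
  | inl h => linarith [h.1]
  | inr h => linarith [h.1]

lemma key_log (a b c d : ℂ) (ha : ‖a - 1‖ < 1) (hb : ‖b - 1‖ < 1)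
    (hc : ‖c - 1‖ < 1) (hd : ‖d - 1‖ < 1)
    (habc : a * b⁻¹ * c = d) :
    Complex.log a - Complex.log b + Complex.log c = Complex.log d := by
  have ha0 := ne_zero_of_abs_sub_one_lt a ha
  have hb0 := ne_zero_of_abs_sub_one_lt b hb
  have hc0 := ne_zero_of_abs_sub_one_lt c hc
  have hd0 := ne_zero_of_abs_sub_one_lt d hd
  have hexp : Complex.exp (Complex.log a - Complex.log b + Complex.log c)
      = Complex.exp (Complex.log d) := by
    rw [Complex.exp_add, Complex.exp_sub, Complex.exp_log ha0, Complex.exp_log hb0,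
      Complex.exp_log hc0, Complex.exp_log hd0, ← habc]
    field_simp
  obtain ⟨n, hn⟩ := Complex.exp_eq_exp_iff_exists_int.mp hexp
  have him : Complex.arg a - Complex.arg b + Complex.arg c
      = Complex.arg d + (n : ℝ) * (2 * Real.pi) := by
    have := congrArg Complex.im hn
    simpa [Complex.log_im, Complex.add_im, Complex.sub_im, mul_comm] using this
  have hpi := Real.pi_pos
  have h1 := arg_small a ha
  have h2 := arg_small b hb
  have h3 := arg_small c hc
  have h4 := arg_small d hd
  have hn0 : n = 0 := by
    obtain ⟨hA1, hA2⟩ := abs_lt.mp h1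
    obtain ⟨hB1, hB2⟩ := abs_lt.mp h2
    obtain ⟨hC1, hC2⟩ := abs_lt.mp h3
    obtain ⟨hD1, hD2⟩ := abs_lt.mp h4
    have hlt : (n : ℝ) * (2 * Real.pi) < 2 * Real.pi := by linarith
    have hgt : -(2 * Real.pi) < (n : ℝ) * (2 * Real.pi) := by linarith
    have hn1 : (n : ℝ) < 1 := by nlinarith
    have hn2 : (-1 : ℝ) < (n : ℝ) := by nlinarith
    have : -1 < n ∧ n < 1 := by exact_mod_cast And.intro hn2 hn1
    omega
  rw [hn0] at hn
  simpa using hn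

/-- Given transition functions `Φ_{ij}` on a finite open cover whose cocycle
defect `δ_{ijk}` satisfies `|δ_{ijk} − 1| < 1` and the 2-cocycle identity, and a partition
of unity `{h_k}` subordinate to the cover, the corrected transition functions
`Ψ_{ij} = exp(−Σ_k h_k log δ_{kij})·Φ_{ij}` satisfy the exact cocycle condition
`Ψ_{jk}·Ψ_{ik}⁻¹·Ψ_{ij} = 1` on all triple overlaps. -/
theorem stmt17 (X : Type*) [TopologicalSpace X] (ι : Type*) [Fintype ι]
    (V : ι → Set X) (hopen : ∀ i, IsOpen (V i)) (hcov : ∀ x, ∃ i, x ∈ V i)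
    (Φ : ι → ι → X → ℂ)
    (hcont : ∀ i j, ContinuousOn (Φ i j) (V i ∩ V j))
    (hne : ∀ i j, ∀ x ∈ V i ∩ V j, Φ i j x ≠ 0)
    (hinvsym : ∀ i j, ∀ x ∈ V i ∩ V j, Φ j i x = (Φ i j x)⁻¹)
    (hsmall : ∀ i j k, ∀ x ∈ V i ∩ V j ∩ V k,
      ‖cocycleDefect Φ i j k x - 1‖ < 1)
    (hcoc : ∀ i j k l, ∀ x ∈ V i ∩ V j ∩ V k ∩ V l,
      cocycleDefect Φ j k l x * (cocycleDefect Φ i k l x)⁻¹ *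
        cocycleDefect Φ i j l x * (cocycleDefect Φ i j k x)⁻¹ = 1)
    (h : ι → X → ℝ)
    (hnonneg : ∀ k x, 0 ≤ h k x)
    (hsupp : ∀ k x, x ∉ V k → h k x = 0)
    (hsum : ∀ x, ∑ k, h k x = 1) :
    ∀ i j k, ∀ x ∈ V i ∩ V j ∩ V k,
      correctedTransition h Φ j k x * (correctedTransition h Φ i k x)⁻¹ *
        correctedTransition h Φ i j x = 1 := by
  intro i j k x hx
  obtain ⟨⟨hvi, hvj⟩, hvk⟩ := hx
  set δ := cocycleDefect Φ i j k x with hδdef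
  have hδsmall : ‖δ - 1‖ < 1 := hsmall i j k x ⟨⟨hvi, hvj⟩, hvk⟩
  have hδ0 : δ ≠ 0 := ne_zero_of_abs_sub_one_lt δ hδsmall
  -- per-term identity
  have hterm : ∀ l, (h l x : ℂ) * Complex.log (cocycleDefect Φ l j k x)
      - (h l x : ℂ) * Complex.log (cocycleDefect Φ l i k x)
      + (h l x : ℂ) * Complex.log (cocycleDefect Φ l i j x)
      = (h l x : ℂ) * Complex.log δ := by
    intro l
    by_cases hl : h l x = 0
    · simp [hl]
    · have hxl : x ∈ V l := by
        by_contra hc'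
        exact hl (hsupp l x hc')
      have h1 : ‖cocycleDefect Φ l j k x - 1‖ < 1 :=
        hsmall l j k x ⟨⟨hxl, hvj⟩, hvk⟩
      have h2 : ‖cocycleDefect Φ l i k x - 1‖ < 1 :=
        hsmall l i k x ⟨⟨hxl, hvi⟩, hvk⟩
      have h3 : ‖cocycleDefect Φ l i j x - 1‖ < 1 :=
        hsmall l i j x ⟨⟨hxl, hvi⟩, hvj⟩
      have hcc := hcoc l i j k x ⟨⟨⟨hxl, hvi⟩, hvj⟩, hvk⟩
      have hmul : cocycleDefect Φ l j k x * (cocycleDefect Φ l i k x)⁻¹ *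
          cocycleDefect Φ l i j x = δ := by
        have n1 := ne_zero_of_abs_sub_one_lt _ h1
        have n2 := ne_zero_of_abs_sub_one_lt _ h2
        have n3 := ne_zero_of_abs_sub_one_lt _ h3
        rw [← hδdef] at hcc
        field_simp at hcc ⊢
        linear_combination -hcc
      have := key_log _ _ _ _ h1 h2 h3 hδsmall hmul
      rw [← this]; ring
  -- sum identity
  have hsumeq : (∑ l, (h l x : ℂ) * Complex.log (cocycleDefect Φ l j k x))
      - (∑ l, (h l x : ℂ) * Complex.log (cocycleDefect Φ l i k x))
      + (∑ l, (h l x : ℂ) * Complex.log (cocycleDefect Φ l i j x))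
      = Complex.log δ := by
    rw [← Finset.sum_sub_distrib, ← Finset.sum_add_distrib]
    calc _ = ∑ l, (h l x : ℂ) * Complex.log δ := Finset.sum_congr rfl (fun l _ => hterm l)
      _ = (∑ l, (h l x : ℂ)) * Complex.log δ := by rw [Finset.sum_mul]
      _ = Complex.log δ := by
          have : (∑ l, (h l x : ℂ)) = 1 := by
            push_cast [← Complex.ofReal_sum]
            exact_mod_cast congrArg (Complex.ofReal) (hsum x)
          rw [this, one_mul]
  -- final algebra
  have hΦik : Φ i k x ≠ 0 := hne i k x ⟨hvi, hvk⟩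
  unfold correctedTransition
  rw [mul_inv, ← Complex.exp_neg, neg_neg]
  calc Complex.exp (-(∑ l, (h l x : ℂ) * Complex.log (cocycleDefect Φ l j k x))) * Φ j k x *
        (Complex.exp (∑ l, (h l x : ℂ) * Complex.log (cocycleDefect Φ l i k x)) * (Φ i k x)⁻¹) *
        (Complex.exp (-(∑ l, (h l x : ℂ) * Complex.log (cocycleDefect Φ l i j x))) * Φ i j x)
      = Complex.exp (-((∑ l, (h l x : ℂ) * Complex.log (cocycleDefect Φ l j k x))
          - (∑ l, (h l x : ℂ) * Complex.log (cocycleDefect Φ l i k x))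
          + (∑ l, (h l x : ℂ) * Complex.log (cocycleDefect Φ l i j x)))) * δ := by
        rw [show -((∑ l, (h l x : ℂ) * Complex.log (cocycleDefect Φ l j k x))
          - (∑ l, (h l x : ℂ) * Complex.log (cocycleDefect Φ l i k x))
          + (∑ l, (h l x : ℂ) * Complex.log (cocycleDefect Φ l i j x)))
          = -(∑ l, (h l x : ℂ) * Complex.log (cocycleDefect Φ l j k x))
          + (∑ l, (h l x : ℂ) * Complex.log (cocycleDefect Φ l i k x))
          + -(∑ l, (h l x : ℂ) * Complex.log (cocycleDefect Φ l i j x)) from by ring,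
          Complex.exp_add, Complex.exp_add, hδdef]
        unfold cocycleDefect
        ring
    _ = 1 := by rw [hsumeq, Complex.exp_neg, Complex.exp_log hδ0, inv_mul_cancel₀ hδ0]
end
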